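/- Assume ℙ is ψ-mixing. If ω ∈ Ω_ℙ is not a periodic point of T, then ρ_{A_n^ω} → 0 as n → ∞. -/

import Mathlib

open MeasureTheory Filter Set ProbabilityTheory
open scoped ENNReal

namespace Nonconv

variable {𝒜 : Type*} [MeasurableSpace 𝒜]

/-- The left shift `T` on the sequence space `ℕ → 𝒜`. -/
def shift : (ℕ → 𝒜) → ℕ → 𝒜 := fun ω i => ω (i + 1)

/-- The `n`-cylinder `[a₀,…,a_{n-1}]` determined by the first `n` symbols of `a`. -/
def cyl (n : ℕ) (a : ℕ → 𝒜) : Set (ℕ → 𝒜) := {ω | ∀ i < n, ω i = a i}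

/-- The sub-σ-algebra `ℱ_I` generated by the coordinates in `I`. -/
def coordSigma (I : Set ℕ) : MeasurableSpace (ℕ → 𝒜) :=
  ⨆ i ∈ I, MeasurableSpace.comap (fun ω => ω i) inferInstance

/-- The set of ratios `|μ(B∩C)/(μ(B)μ(C)) − 1|` over `B ∈ G`, `C ∈ H` with
`μ(B)μ(C) ≠ 0`. -/
def psiSet (μ : Measure (ℕ → 𝒜)) (G H : MeasurableSpace (ℕ → 𝒜)) : Set ℝ :=
  {x | ∃ B C : Set (ℕ → 𝒜), MeasurableSet[G] B ∧ MeasurableSet[H] C ∧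
    μ B ≠ 0 ∧ μ C ≠ 0 ∧
    x = |(μ (B ∩ C)).toReal / ((μ B).toReal * (μ C).toReal) - 1|}

/-- The ψ-dependence coefficient `ψ(G,H)`. -/
noncomputable def psi (μ : Measure (ℕ → 𝒜)) (G H : MeasurableSpace (ℕ → 𝒜)) : ℝ :=
  sSup (psiSet μ G H)

/-- The set whose supremum defines `ψ_m`. -/
def psiMixSet (μ : Measure (ℕ → 𝒜)) (m : ℕ) : Set ℝ :=
  ⋃ n : ℕ, psiSet μ (coordSigma {i | i ≤ n}) (coordSigma {i | n + m + 1 ≤ i})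

/-- The ψ-mixing coefficient `ψ_m = sup_n ψ(ℱ_{0,n}, ℱ_{n+m+1,∞})`. -/
noncomputable def psiMix (μ : Measure (ℕ → 𝒜)) (m : ℕ) : ℝ := sSup (psiMixSet μ m)

/-- `μ` is ψ-mixing: `ψ_0 < ∞` and `ψ_m → 0` as `m → ∞`. -/
def IsPsiMixing (μ : Measure (ℕ → 𝒜)) : Prop :=
  BddAbove (psiMixSet μ 0) ∧ Tendsto (psiMix μ) atTop (nhds 0)

/-- `π(A)` for the cylinder `A = cyl n a`:
the minimal `k ∈ {1,…,n}` with `A ∩ T^{-k}A ≠ ∅`. -/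
noncomputable def piCyl (n : ℕ) (a : ℕ → 𝒜) : ℕ :=
  sInf {k : ℕ | 1 ≤ k ∧ k ≤ n ∧ (cyl n a ∩ shift^[k] ⁻¹' cyl n a).Nonempty}

/-- Periodic extension of the string `a` with period `r`, so that
`cyl m (per r a)` is the cylinder `R^{m/r}` if `R = cyl r a`. -/
def per (r : ℕ) (a : ℕ → 𝒜) : ℕ → 𝒜 := fun i => a (i % r)

/-- `κ = lcm { r / gcd(r, dᵢ) : 1 ≤ i ≤ ℓ }`. -/
def kap (ℓ : ℕ) (d : Fin ℓ → ℕ) (r : ℕ) : ℕ :=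
  Finset.univ.lcm fun i => r / Nat.gcd r (d i)

/-- `ρ_A = ∏ᵢ ℙ(R^{(n+dᵢκ)/r} | A)` for `A = cyl n a`, `r = π(A)`, `R = A(π)`. -/
noncomputable def rho (μ : Measure (ℕ → 𝒜)) (ℓ : ℕ) (d : Fin ℓ → ℕ) (n : ℕ)
    (a : ℕ → 𝒜) : ℝ :=
  ∏ i : Fin ℓ,
    (μ (cyl (n + d i * kap ℓ d (piCyl n a)) (per (piCyl n a) a) ∩ cyl n a)).toReal /
      (μ (cyl n a)).toReal

/-- The multiple recurrence event `{X_k^A = 1} = ∩ᵢ T^{-qᵢ(k)}A`. -/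
def hitEvent (ℓ : ℕ) (q : Fin ℓ → ℕ → ℕ) (A : Set (ℕ → 𝒜)) (k : ℕ) : Set (ℕ → 𝒜) :=
  {ω | ∀ i : Fin ℓ, shift^[q i k] ω ∈ A}

/-- The nonconventional sum `S_N^A = ∑_{k=1}^N ∏ᵢ 1_A ∘ T^{qᵢ(k)}`. -/
noncomputable def SN (ℓ : ℕ) (q : Fin ℓ → ℕ → ℕ) (A : Set (ℕ → 𝒜)) (N : ℕ)
    (ω : ℕ → 𝒜) : ℕ :=
  ∑ k ∈ Finset.Icc 1 N, Set.indicator (hitEvent ℓ q A k) (fun _ => 1) ω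

/-- The probability a Poisson random variable with parameter `t` lies in `L`. -/
noncomputable def poissonProb (t : ℝ) (L : Set ℕ) : ℝ :=
  ∑' l : L, Real.exp (-t) * t ^ (l : ℕ) / Nat.factorial (l : ℕ)

/-- `℘(x) = x eˣ`. -/
noncomputable def wp (x : ℝ) : ℝ := x * Real.exp x

/-- `g(n) = inf_{k ≥ n} min_{1 ≤ i ≤ ℓ-1} (q_{i+1}(k) − q_i(k))`, valued in `ℕ∞`. -/
noncomputable def gfun (ℓ : ℕ) (q : Fin ℓ → ℕ → ℕ) (n : ℕ) : ℕ∞ :=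
  ⨅ (k : ℕ) (_ : n ≤ k) (i : Fin ℓ) (j : Fin ℓ) (_ : (i : ℕ) + 1 = (j : ℕ)),
    ((q j k - q i k : ℕ) : ℕ∞)

/-- `γ(n) = min {k ≥ 0 : g(k) ≥ 2n}`. -/
noncomputable def gam (ℓ : ℕ) (q : Fin ℓ → ℕ → ℕ) (n : ℕ) : ℕ :=
  sInf {k : ℕ | ((2 * n : ℕ) : ℕ∞) ≤ gfun ℓ q k}

/-- The nonconventional hitting time
`τ_A(ω) = min {k ≥ 1 : ∏ᵢ 1_A(T^{dᵢk}ω) = 1}`, valued in `ℝ≥0∞` (equal to `∞` if no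
such `k` exists). -/
noncomputable def tauA (ℓ : ℕ) (d : Fin ℓ → ℕ) (A : Set (ℕ → 𝒜)) (ω : ℕ → 𝒜) : ℝ≥0∞ :=
  sInf {x : ℝ≥0∞ | ∃ k : ℕ, 1 ≤ k ∧ (∀ i : Fin ℓ, shift^[d i * k] ω ∈ A) ∧ x = (k : ℝ≥0∞)}


set_option linter.unusedSectionVars false
set_option linter.unusedVariables false

/-! ### Auxiliary lemmas -/

lemma shift_iterate_apply (t : ℕ) (ω : ℕ → 𝒜) (i : ℕ) : (shift^[t] ω) i = ω (i + t) := by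
  induction t generalizing ω i with
  | zero => rfl
  | succ t ih =>
    rw [Function.iterate_succ_apply, ih]
    simp [shift, Nat.add_assoc]

lemma measurable_coord {I : Set ℕ} {i : ℕ} (hi : i ∈ I) :
    Measurable[coordSigma (𝒜 := 𝒜) I] (fun ω : ℕ → 𝒜 => ω i) := by
  rw [measurable_iff_comap_le]
  exact le_iSup₂ (f := fun (j : ℕ) (_ : j ∈ I) =>
    MeasurableSpace.comap (fun ω : ℕ → 𝒜 => ω j) inferInstance) i hi

lemma measurableSet_cylLike [MeasurableSingletonClass 𝒜] {I : Set ℕ} (n : ℕ) (c : ℕ → ℕ)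
    (v : ℕ → 𝒜) (hc : ∀ j < n, c j ∈ I) :
    MeasurableSet[coordSigma I] {ω : ℕ → 𝒜 | ∀ j < n, ω (c j) = v j} := by
  have heq : {ω : ℕ → 𝒜 | ∀ j < n, ω (c j) = v j}
      = ⋂ j ∈ Finset.range n, (fun ω : ℕ → 𝒜 => ω (c j)) ⁻¹' {v j} := by
    ext x; simp
  rw [heq]
  exact MeasurableSet.biInter (Finset.range n).countable_toSet fun j hj =>
    measurable_coord (hc j (Finset.mem_range.mp hj)) (measurableSet_singleton _)

lemma measurableSet_cyl [MeasurableSingletonClass 𝒜] (n : ℕ) (a : ℕ → 𝒜) :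
    MeasurableSet (cyl n a) := by
  have heq : cyl n a = ⋂ j ∈ Finset.range n, (fun ω : ℕ → 𝒜 => ω j) ⁻¹' {a j} := by
    ext x; simp [cyl]
  rw [heq]
  exact MeasurableSet.biInter (Finset.range n).countable_toSet fun j hj =>
    (measurable_pi_apply j) (measurableSet_singleton _)

lemma coordSigma_mono {I J : Set ℕ} (h : I ⊆ J) :
    coordSigma (𝒜 := 𝒜) I ≤ coordSigma J :=
  biSup_mono h

lemma psiSet_mono {μ : Measure (ℕ → 𝒜)} {G G' H : MeasurableSpace (ℕ → 𝒜)}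
    (hG : G ≤ G') : psiSet μ G H ⊆ psiSet μ G' H := by
  rintro x ⟨B, C, hB, hC, h1, h2, h3⟩
  exact ⟨B, C, hG _ hB, hC, h1, h2, h3⟩

lemma psiMixSet_subset_zero (μ : Measure (ℕ → 𝒜)) (m : ℕ) :
    psiMixSet μ m ⊆ psiMixSet μ 0 := by
  intro x hx
  obtain ⟨n, hn⟩ := Set.mem_iUnion.mp hx
  refine Set.mem_iUnion.mpr ⟨n + m, ?_⟩
  have h1 : coordSigma (𝒜 := 𝒜) {i | i ≤ n} ≤ coordSigma {i | i ≤ n + m} :=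
    coordSigma_mono fun i hi => le_trans hi (Nat.le_add_right n m)
  have h2 : {i : ℕ | n + m + 1 ≤ i} = {i : ℕ | n + m + 0 + 1 ≤ i} := by
    ext i; simp
  have := psiSet_mono (μ := μ) (H := coordSigma {i | n + m + 1 ≤ i}) h1 hn
  rwa [h2] at this

lemma psiMix_nonneg (μ : Measure (ℕ → 𝒜)) (m : ℕ) : 0 ≤ psiMix μ m := by
  apply Real.sSup_nonneg
  rintro x hx
  obtain ⟨n, B, C, _, _, _, _, rfl⟩ := Set.mem_iUnion.mp hx
  exact abs_nonneg _

lemma measure_inter_le_psi (μ : Measure (ℕ → 𝒜)) [IsProbabilityMeasure μ]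
    (hmix : IsPsiMixing μ) (m n : ℕ) {B C : Set (ℕ → 𝒜)}
    (hB : MeasurableSet[coordSigma {i | i ≤ n}] B)
    (hC : MeasurableSet[coordSigma {i | n + m + 1 ≤ i}] C) :
    (μ (B ∩ C)).toReal ≤ (1 + psiMix μ m) * ((μ B).toReal * (μ C).toReal) := by
  by_cases hB0 : μ B = 0
  · have h1 : μ (B ∩ C) = 0 := measure_mono_null Set.inter_subset_left hB0
    simp [h1, hB0]
  by_cases hC0 : μ C = 0
  · have h1 : μ (B ∩ C) = 0 := measure_mono_null Set.inter_subset_right hC0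
    simp [h1, hC0]
  have hbpos : 0 < (μ B).toReal := ENNReal.toReal_pos hB0 (measure_ne_top μ B)
  have hcpos : 0 < (μ C).toReal := ENNReal.toReal_pos hC0 (measure_ne_top μ C)
  have hmem : |(μ (B ∩ C)).toReal / ((μ B).toReal * (μ C).toReal) - 1| ∈ psiMixSet μ m :=
    Set.mem_iUnion.mpr ⟨n, B, C, hB, hC, hB0, hC0, rfl⟩
  have hbdd : BddAbove (psiMixSet μ m) := hmix.1.mono (psiMixSet_subset_zero μ m)
  have hle : |(μ (B ∩ C)).toReal / ((μ B).toReal * (μ C).toReal) - 1| ≤ psiMix μ m :=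
    le_csSup hbdd hmem
  have h2 : (μ (B ∩ C)).toReal / ((μ B).toReal * (μ C).toReal) ≤ 1 + psiMix μ m := by
    have := le_abs_self ((μ (B ∩ C)).toReal / ((μ B).toReal * (μ C).toReal) - 1)
    linarith
  have hpos : 0 < (μ B).toReal * (μ C).toReal := mul_pos hbpos hcpos
  calc (μ (B ∩ C)).toReal
      = (μ (B ∩ C)).toReal / ((μ B).toReal * (μ C).toReal) * ((μ B).toReal * (μ C).toReal) := by
        field_simp
    _ ≤ (1 + psiMix μ m) * ((μ B).toReal * (μ C).toReal) :=
        mul_le_mul_of_nonneg_right h2 hpos.le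

lemma cyl_decay [MeasurableSingletonClass 𝒜] (μ : Measure (ℕ → 𝒜)) [IsProbabilityMeasure μ]
    (hinv : MeasurePreserving (shift : (ℕ → 𝒜) → ℕ → 𝒜) μ μ) (hmix : IsPsiMixing μ)
    (g : ℕ) (p : ℝ) (hp : ∀ w : ℕ → 𝒜, (μ (cyl 1 w)).toReal ≤ p) :
    ∀ k L (w : ℕ → 𝒜), k * (g + 1) ≤ L →
      (μ (cyl L w)).toReal ≤ ((1 + psiMix μ g) * p) ^ k := by
  intro k
  induction k with
  | zero =>
    intro L w _
    simpa using ENNReal.toReal_mono ENNReal.one_ne_top (prob_le_one (μ := μ) (s := cyl L w))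
  | succ k ih =>
    intro L w hL
    set w' : ℕ → 𝒜 := fun j => w (j + (g + 1)) with hw'
    set D : Set (ℕ → 𝒜) := {x | ∀ j < L - (g + 1), x (j + (g + 1)) = w' j} with hD
    have hL2 : k * (g + 1) + (g + 1) ≤ L := by rw [Nat.succ_mul] at hL; exact hL
    have hsub : cyl L w ⊆ cyl 1 w ∩ D := by
      intro x hx
      refine ⟨fun i hi => hx i (by omega), fun j hj => hx _ (by omega)⟩
    have hDpre : D = (shift^[g + 1]) ⁻¹' cyl (L - (g + 1)) w' := by
      ext x
      simp only [hD, Set.mem_setOf_eq, Set.mem_preimage, cyl]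
      constructor
      · intro h j hj; rw [shift_iterate_apply]; exact h j hj
      · intro h j hj; have := h j hj; rwa [shift_iterate_apply] at this
    have hDmeas : MeasurableSet[coordSigma {i : ℕ | 0 + g + 1 ≤ i}] D :=
      measurableSet_cylLike (L - (g + 1)) (fun j => j + (g + 1)) w' (fun j _ => by
        simp only [Set.mem_setOf_eq]; omega)
    have hBmeas : MeasurableSet[coordSigma {i : ℕ | i ≤ 0}] (cyl 1 (𝒜 := 𝒜) w) := by
      have : cyl 1 (𝒜 := 𝒜) w = {x : ℕ → 𝒜 | ∀ j < 1, x ((fun t => t) j) = w j} := by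
        ext x; simp [cyl]
      rw [this]
      exact measurableSet_cylLike 1 (fun t => t) w (fun j hj => by
        simp only [Set.mem_setOf_eq]; omega)
    have hψ := measure_inter_le_psi μ hmix g 0 hBmeas hDmeas
    have hDval : μ D = μ (cyl (L - (g + 1)) w') := by
      rw [hDpre]
      exact (hinv.iterate (g + 1)).measure_preimage
        (measurableSet_cyl _ _).nullMeasurableSet
    have hih : (μ (cyl (L - (g + 1)) w')).toReal ≤ ((1 + psiMix μ g) * p) ^ k :=
      ih (L - (g + 1)) w' (by omega)
    have h1ψ : 0 ≤ 1 + psiMix μ g := by linarith [psiMix_nonneg μ g]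
    have hp0 : 0 ≤ p := le_trans ENNReal.toReal_nonneg (hp w)
    calc (μ (cyl L w)).toReal
        ≤ (μ (cyl 1 w ∩ D)).toReal :=
          ENNReal.toReal_mono (measure_ne_top μ _) (measure_mono hsub)
      _ ≤ (1 + psiMix μ g) * ((μ (cyl 1 w)).toReal * (μ D).toReal) := hψ
      _ ≤ (1 + psiMix μ g) * (p * ((1 + psiMix μ g) * p) ^ k) := by
          apply mul_le_mul_of_nonneg_left _ h1ψ
          apply mul_le_mul (hp w) _ ENNReal.toReal_nonneg hp0
          rw [hDval]; exact hih
      _ = ((1 + psiMix μ g) * p) ^ (k + 1) := by ring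

lemma piCyl_tendsto (ω : ℕ → 𝒜)
    (hnp : ∀ dper : ℕ, 0 < dper → ¬ Function.IsPeriodicPt shift dper ω) :
    Tendsto (fun n => piCyl n ω) atTop atTop := by
  have key : ∀ r : ℕ, ∃ i, 0 < r → ω (i + r) ≠ ω i := by
    intro r
    by_cases hr : 0 < r
    · by_contra h
      push_neg at h
      exact hnp r hr (funext fun i => by
        rw [shift_iterate_apply]; exact (h i).2)
    · exact ⟨0, fun h => absurd h hr⟩
  choose I hI using key
  rw [tendsto_atTop]
  intro M
  have hN : ∀ᶠ n in atTop, max (M + 1) ((Finset.Icc 1 M).sup fun r => I r + r + 1) ≤ n :=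
    eventually_ge_atTop _
  filter_upwards [hN] with n hn
  set S := {k : ℕ | 1 ≤ k ∧ k ≤ n ∧ (cyl n ω ∩ shift^[k] ⁻¹' cyl n ω).Nonempty} with hS
  have hn1 : 1 ≤ n := le_trans (le_max_left _ _) hn |>.trans' (by omega)
  have hSne : S.Nonempty := by
    refine ⟨n, le_trans (by omega) (le_trans (le_max_left _ _) hn), le_refl n, ⟨per n ω, ?_, ?_⟩⟩
    · intro i hi
      simp [per, Nat.mod_eq_of_lt hi]
    · intro i hi
      simp only [shift_iterate_apply, per]
      rw [Nat.add_mod_right, Nat.mod_eq_of_lt hi]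
  have hmem : piCyl n ω ∈ S := Nat.sInf_mem hSne
  obtain ⟨h1, h2, x, hx1, hx2⟩ := hmem
  by_contra hlt
  push_neg at hlt
  set r := piCyl n ω with hrdef
  have hrM : r ∈ Finset.Icc 1 M := Finset.mem_Icc.mpr ⟨h1, by omega⟩
  have hIr : I r + r + 1 ≤ n :=
    le_trans (le_trans (Finset.le_sup (f := fun r => I r + r + 1) hrM) (le_max_right _ _)) hn
  have hcontra : ω (I r + r) = ω (I r) := by
    have e1 : x (I r + r) = ω (I r + r) := hx1 _ (by omega)
    have e2 : (shift^[r] x) (I r) = ω (I r) := hx2 _ (by omega)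
    rw [shift_iterate_apply] at e2
    rw [← e1, e2]
  exact hI r h1 hcontra

lemma kap_pos (ℓ : ℕ) (d : Fin ℓ → ℕ) (hd1 : ∀ i, 1 ≤ d i) {r : ℕ} (hr : 0 < r) :
    0 < kap ℓ d r := by
  rcases Nat.eq_zero_or_pos (kap ℓ d r) with h0 | h
  swap
  · exact h
  exfalso
  rw [kap, Finset.lcm_eq_zero_iff] at h0
  obtain ⟨i, -, hi⟩ := h0
  have : 0 < r / Nat.gcd r (d i) :=
    Nat.div_pos (Nat.le_of_dvd hr (Nat.gcd_dvd_left r (d i)))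
      (Nat.gcd_pos_of_pos_left _ hr)
  exact this.ne' hi

lemma le_kap (ℓ : ℕ) (d : Fin ℓ → ℕ) (hd1 : ∀ i, 1 ≤ d i) (i₀ : Fin ℓ) {r : ℕ} (hr : 0 < r) :
    r / d i₀ ≤ kap ℓ d r := by
  have h1 : r / d i₀ ≤ r / Nat.gcd r (d i₀) :=
    Nat.div_le_div_left (Nat.le_of_dvd (hd1 i₀) (Nat.gcd_dvd_right r (d i₀))) (Nat.gcd_pos_of_pos_left _ hr)
  have h2 : r / Nat.gcd r (d i₀) ≤ kap ℓ d r :=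
    Nat.le_of_dvd (kap_pos ℓ d hd1 hr) (Finset.dvd_lcm (Finset.mem_univ i₀))
  omega

/-- second part of Lemma 3.7 / (2.13). If `μ` is ψ-mixing and
`ω ∈ Ω_ℙ` is not periodic, then `ρ_{A_n^ω} → 0` as `n → ∞`. -/
theorem rho_tendsto_zero_of_not_periodic
    [Countable 𝒜] [MeasurableSingletonClass 𝒜] [Nontrivial 𝒜]
    (μ : Measure (ℕ → 𝒜)) [IsProbabilityMeasure μ]
    (hinv : MeasurePreserving (shift : (ℕ → 𝒜) → ℕ → 𝒜) μ μ)
    (hpos : ∀ a : 𝒜, 0 < μ (cyl 1 fun _ => a))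
    (hmix : IsPsiMixing μ)
    (ℓ : ℕ) (hl : 0 < ℓ) (d : Fin ℓ → ℕ) (hd1 : ∀ i, 1 ≤ d i) (hdmono : StrictMono d)
    (ω : ℕ → 𝒜) (hΩP : ∀ n : ℕ, μ (cyl n ω) ≠ 0)
    (hnp : ∀ dper : ℕ, 0 < dper → ¬ Function.IsPeriodicPt shift dper ω) :
    Tendsto (fun n => rho μ ℓ d n ω) atTop (nhds 0) := by
  classical
  obtain ⟨a, b, hab⟩ := exists_pair_ne 𝒜
  set ε : ℝ := min (μ (cyl 1 fun _ => a)).toReal (μ (cyl 1 fun _ => b)).toReal with hεdef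
  have hεpos : 0 < ε :=
    lt_min (ENNReal.toReal_pos (hpos a).ne' (measure_ne_top μ _))
      (ENNReal.toReal_pos (hpos b).ne' (measure_ne_top μ _))
  have hone : μ (cyl 1 fun _ => a) ≤ 1 := prob_le_one
  have hε1 : ε ≤ 1 := le_trans (min_le_left _ _)
    (by simpa using ENNReal.toReal_mono ENNReal.one_ne_top hone)
  -- every 1-cylinder has measure at most 1 - ε
  have hsingle : ∀ w : ℕ → 𝒜, (μ (cyl 1 w)).toReal ≤ 1 - ε := by
    intro w
    have key : ∀ c : 𝒜, w 0 ≠ c → (μ (cyl 1 fun _ => c)).toReal ≥ ε →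
        (μ (cyl 1 w)).toReal ≤ 1 - ε := by
      intro c hc hcε
      have hdisj : Disjoint (cyl 1 w) (cyl 1 (𝒜 := 𝒜) fun _ => c) := by
        rw [Set.disjoint_left]
        intro x hx hx'
        exact hc ((hx 0 one_pos).symm.trans (hx' 0 one_pos))
      have hsum : μ (cyl 1 w) + μ (cyl 1 fun _ => c) ≤ 1 := by
        rw [← measure_union hdisj (measurableSet_cyl _ _)]
        exact prob_le_one
      have h' : (μ (cyl 1 w)).toReal + (μ (cyl 1 fun _ => c)).toReal ≤ 1 := by
        rw [← ENNReal.toReal_add (measure_ne_top μ _) (measure_ne_top μ _)]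
        simpa using ENNReal.toReal_mono ENNReal.one_ne_top hsum
      linarith
    rcases ne_or_eq (w 0) a with h | h
    · exact key a h (min_le_left _ _)
    · exact key b (h ▸ hab) (min_le_right _ _)
  -- choose the gap g with small ψ-coefficient
  obtain ⟨g, hg⟩ : ∃ g, psiMix μ g < ε / 2 :=
    (hmix.2.eventually (gt_mem_nhds (by linarith))).exists
  have hψ0 : 0 ≤ psiMix μ g := psiMix_nonneg μ g
  set s : ℝ := psiMix μ g with hsdef
  set θ : ℝ := (1 + s) * (1 - ε) with hθdef
  have hθ0 : 0 ≤ θ := mul_nonneg (by linarith) (by linarith)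
  have hθ1 : θ < 1 := by nlinarith
  have hdecay := cyl_decay μ hinv hmix g (1 - ε) hsingle
  set i₀ : Fin ℓ := ⟨0, hl⟩ with hi₀def
  -- the pointwise bound
  have hbound : ∀ n, 1 ≤ n → rho μ ℓ d n ω ≤
      (1 + s) * θ ^ ((d i₀ * kap ℓ d (piCyl n ω) - g) / (g + 1)) := by
    intro n hn
    set r : ℕ := piCyl n ω with hrdef
    set κ : ℕ := kap ℓ d r with hκdef
    set f : Fin ℓ → ℝ := fun i =>
      (μ (cyl (n + d i * κ) (per r ω) ∩ cyl n ω)).toReal / (μ (cyl n ω)).toReal with hfdef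
    have hA0 : 0 < (μ (cyl n ω)).toReal :=
      ENNReal.toReal_pos (hΩP n) (measure_ne_top μ _)
    have hf0 : ∀ i, 0 ≤ f i := fun i => div_nonneg ENNReal.toReal_nonneg hA0.le
    have hfle1 : ∀ i, f i ≤ 1 := fun i => (div_le_one hA0).mpr
      (ENNReal.toReal_mono (measure_ne_top μ _) (measure_mono Set.inter_subset_right))
    have hprod : rho μ ℓ d n ω ≤ f i₀ := by
      have h1 : rho μ ℓ d n ω = ∏ i, f i := rfl
      rw [h1]
      calc ∏ i, f i ≤ ∏ i, (if i = i₀ then f i else 1) := by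
            refine Finset.prod_le_prod (fun i _ => hf0 i) (fun i _ => ?_)
            by_cases h : i = i₀ <;> simp [h, hfle1 i]
        _ = f i₀ := by simp [Finset.prod_ite_eq' Finset.univ i₀ f]
    set m : ℕ := d i₀ * κ with hmdef
    set L : ℕ := m - g with hLdef
    set w' : ℕ → 𝒜 := fun j => per r ω (j + (n + g)) with hw'def
    set D : Set (ℕ → 𝒜) := {x | ∀ j < L, x (j + (n + g)) = w' j} with hDdef
    -- the long cylinder (intersected with A) sits inside A ∩ D
    have hCD : cyl (n + m) (per r ω) ∩ cyl n ω ⊆ cyl n ω ∩ D := by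
      rintro x ⟨hxC, hxA⟩
      exact ⟨hxA, fun j hj => hxC _ (by omega)⟩
    have hAmeas : MeasurableSet[coordSigma {i : ℕ | i ≤ n - 1}] (cyl n ω) := by
      have : cyl n ω = {x : ℕ → 𝒜 | ∀ j < n, x ((fun t => t) j) = ω j} := by
        ext x; simp [cyl]
      rw [this]
      exact measurableSet_cylLike n (fun t => t) ω (fun j hj => by
        simp only [Set.mem_setOf_eq]; omega)
    have hDmeas : MeasurableSet[coordSigma {i : ℕ | n - 1 + g + 1 ≤ i}] D :=
      measurableSet_cylLike L (fun j => j + (n + g)) w' (fun j _ => by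
        simp only [Set.mem_setOf_eq]; omega)
    have hψ := measure_inter_le_psi μ hmix g (n - 1) hAmeas hDmeas
    have hDval : μ D = μ (cyl L w') := by
      have hDpre : D = (shift^[n + g]) ⁻¹' cyl L w' := by
        ext x
        simp only [hDdef, Set.mem_setOf_eq, Set.mem_preimage, cyl]
        constructor
        · intro h j hj; rw [shift_iterate_apply]; exact h j hj
        · intro h j hj; have := h j hj; rwa [shift_iterate_apply] at this
      rw [hDpre]
      exact (hinv.iterate (n + g)).measure_preimage
        (measurableSet_cyl _ _).nullMeasurableSet
    have hdec : (μ (cyl L w')).toReal ≤ θ ^ (L / (g + 1)) :=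
      hdecay (L / (g + 1)) L w' (Nat.div_mul_le_self L (g + 1))
    have hchain : (μ (cyl (n + m) (per r ω) ∩ cyl n ω)).toReal ≤
        (1 + s) * θ ^ (L / (g + 1)) * (μ (cyl n ω)).toReal := by
      calc (μ (cyl (n + m) (per r ω) ∩ cyl n ω)).toReal
          ≤ (μ (cyl n ω ∩ D)).toReal :=
            ENNReal.toReal_mono (measure_ne_top μ _) (measure_mono hCD)
        _ ≤ (1 + s) * ((μ (cyl n ω)).toReal * (μ D).toReal) := hψ
        _ ≤ (1 + s) * ((μ (cyl n ω)).toReal * θ ^ (L / (g + 1))) := by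
            apply mul_le_mul_of_nonneg_left _ (by linarith)
            apply mul_le_mul_of_nonneg_left _ ENNReal.toReal_nonneg
            rw [hDval]; exact hdec
        _ = (1 + s) * θ ^ (L / (g + 1)) * (μ (cyl n ω)).toReal := by ring
    have hfinal : f i₀ ≤ (1 + s) * θ ^ (L / (g + 1)) := by
      rw [hfdef]
      exact (div_le_iff₀ hA0).mpr hchain
    exact le_trans hprod hfinal
  -- the exponent tends to infinity
  have hE : Tendsto (fun n => (d i₀ * kap ℓ d (piCyl n ω) - g) / (g + 1)) atTop atTop := by
    rw [tendsto_atTop]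
    intro B
    filter_upwards [(piCyl_tendsto ω hnp).eventually_ge_atTop
      ((B * (g + 1) + g) * d i₀ + 1)] with n hn
    have hr1 : 0 < piCyl n ω := by omega
    have h1 : piCyl n ω / d i₀ ≤ kap ℓ d (piCyl n ω) := le_kap ℓ d hd1 i₀ hr1
    have h2 : B * (g + 1) + g ≤ piCyl n ω / d i₀ := by
      rw [Nat.le_div_iff_mul_le (hd1 i₀)]
      omega
    have h3 : B * (g + 1) + g ≤ d i₀ * kap ℓ d (piCyl n ω) :=
      le_trans (h2.trans h1) (Nat.le_mul_of_pos_left _ (hd1 i₀))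
    rw [Nat.le_div_iff_mul_le (show 0 < g + 1 by omega)]
    omega
  have hθE : Tendsto (fun n => (1 + s) * θ ^ ((d i₀ * kap ℓ d (piCyl n ω) - g) / (g + 1)))
      atTop (nhds 0) := by
    have := ((tendsto_pow_atTop_nhds_zero_of_lt_one hθ0 hθ1).comp hE).const_mul (1 + s)
    simpa using this
  refine squeeze_zero' ?_ ?_ hθE
  · filter_upwards with n
    exact Finset.prod_nonneg fun i _ => div_nonneg ENNReal.toReal_nonneg ENNReal.toReal_nonneg
  · filter_upwards [eventually_ge_atTop 1] with n hn using hbound n hn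

end Nonconv
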